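/- Let G=(V,E) be a connected undirected multigraph without self-loops whose edge set is partitioned into safe edges 𝒮 and unsafe edges 𝒰, and let T be a spanning tree of G that maximizes the number of safe edges |T ∩ 𝒮| among all spanning trees. Then for every safe edge e = uv ∈ 𝒮, the unique u–v path in T consists entirely of safe edges; consequently, the graph obtained from G by contracting all safe edges of T has no safe edges. -/

import Mathlib

/-!
If `T` is a spanning tree of a connected multigraph `G` maximizing the number of safe
edges, then for every safe edge `e = uv` of `G`, the unique `u`–`v` path in `T`
consists entirely of safe edges; equivalently, the endpoints of every safe edge are
connected in the graph `(V, T ∩ 𝒮)` (hence contracting the safe edges of `T` leaves no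
safe edges).
-/

/-- `x` and `y` are joined by some edge of `F` (in either orientation). -/
def Adj {V E : Type*} (ends : E → V × V) (F : Finset E) (x y : V) : Prop :=
  ∃ e ∈ F, ends e = (x, y) ∨ ends e = (y, x)

/-- `T` is a spanning tree of the multigraph with edge set given by `E`:
it has `|V| - 1` edges and connects every pair of vertices. -/
def IsSpanningTree {V E : Type*} [Fintype V] (ends : E → V × V) (T : Finset E) : Prop :=
  T.card = Fintype.card V - 1 ∧
    ∀ x y : V, Relation.ReflTransGen (Adj ends T) x y

lemma Adj.symm' {V E : Type*} {ends : E → V × V} {F : Finset E} {x y : V}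
    (h : Adj ends F x y) : Adj ends F y x := by
  obtain ⟨e, he, h | h⟩ := h
  · exact ⟨e, he, Or.inr h⟩
  · exact ⟨e, he, Or.inl h⟩

lemma adj_mono {V E : Type*} {ends : E → V × V} {F F' : Finset E} (hFF : F ⊆ F')
    {x y : V} (h : Adj ends F x y) : Adj ends F' x y := by
  obtain ⟨e, he, h⟩ := h
  exact ⟨e, hFF he, h⟩

/-- Crossing lemma: along a `T`-chain ending at `v` with `¬ P v`, either all vertices
fail `P`, or there is an edge `f` crossing from `P` to `¬ P` such that the rest of the
chain from the far endpoint to `v` avoids `f`. -/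
lemma cross {V E : Type*} [DecidableEq E] (ends : E → V × V) (T : Finset E)
    (P : V → Prop) (v : V) (hv : ¬ P v) :
    ∀ (l : List V) (x : V), List.Chain (Adj ends T) x l →
      (x :: l).getLast (List.cons_ne_nil _ _) = v →
      (∃ f ∈ T, ∃ a b, (ends f = (a, b) ∨ ends f = (b, a)) ∧ P a ∧ ¬ P b ∧
          Relation.ReflTransGen (Adj ends (T.erase f)) b v) ∨
        (∀ z ∈ x :: l, ¬ P z) := by
  intro l
  induction l with
  | nil =>
      intro x _ hlast
      simp only [List.getLast_singleton] at hlast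
      right
      simp [hlast, hv]
  | cons y l' ih =>
      intro x hchain hlast
      rw [List.Chain, List.isChain_cons_cons] at hchain
      obtain ⟨hxy, hchain'⟩ := hchain
      rw [List.getLast_cons_cons] at hlast
      rcases ih y hchain' hlast with hres | hall
      · exact Or.inl hres
      · by_cases hPx : P x
        · -- crossing edge between x and y
          obtain ⟨f, hfT, hf⟩ := hxy
          left
          refine ⟨f, hfT, x, y, hf, hPx, hall y (by simp), ?_⟩
          -- the chain from y to v avoids f
          refine List.relationReflTransGen_of_exists_isChain_cons l' ?_ hlast
          -- every step of the chain lies in T.erase f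
          have key : ∀ z w : V, ¬ P z → ¬ P w → Adj ends T z w →
              Adj ends (T.erase f) z w := by
            intro z w hz hw ⟨g, hgT, hg⟩
            refine ⟨g, Finset.mem_erase.mpr ⟨?_, hgT⟩, hg⟩
            rintro rfl
            rcases hf with hf | hf <;> rcases hg with hg | hg <;>
              rw [hf] at hg <;> cases hg <;>
              first
                | exact hz hPx
                | exact hw hPx
          have chainlift : ∀ (t : List V) (s : V), List.Chain (Adj ends T) s t →
              (∀ z ∈ s :: t, ¬ P z) → List.Chain (Adj ends (T.erase f)) s t := by
            intro t
            induction t with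
            | nil => exact fun _ _ _ => List.IsChain.singleton _
            | cons d t ih2 =>
                intro s hc hallz
                rw [List.Chain, List.isChain_cons_cons] at hc ⊢
                refine ⟨key s d (hallz s (by simp)) (hallz d (by simp)) hc.1, ?_⟩
                exact ih2 d hc.2 (fun z hz => hallz z (by simp at hz ⊢; tauto))
          exact chainlift l' y hchain' hall
        · right
          intro z hz
          rcases List.mem_cons.mp hz with rfl | hz
          · exact hPx
          · exact hall z hz

theorem stmt18 {V E : Type*} [Fintype V] [DecidableEq V] [Fintype E] [DecidableEq E]
    (ends : E → V × V) (hloop : ∀ e : E, (ends e).1 ≠ (ends e).2)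
    (safeE : Finset E)
    (hconn : ∀ x y : V, Relation.ReflTransGen (Adj ends Finset.univ) x y)
    (T : Finset E) (hT : IsSpanningTree ends T)
    (hmax : ∀ T' : Finset E, IsSpanningTree ends T' →
      (T' ∩ safeE).card ≤ (T ∩ safeE).card) :
    ∀ e ∈ safeE,
      Relation.ReflTransGen (Adj ends (T ∩ safeE)) (ends e).1 (ends e).2 := by
  intro e he
  by_contra h
  set u := (ends e).1 with hu
  set v := (ends e).2 with hv
  -- e ∉ T
  have heT : e ∉ T := by
    intro heT
    exact h (Relation.ReflTransGen.single
      ⟨e, Finset.mem_inter.mpr ⟨heT, he⟩, Or.inl (by simp [hu, hv])⟩)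
  -- the "component of u" predicate
  set P : V → Prop := fun z => Relation.ReflTransGen (Adj ends (T ∩ safeE)) u z with hP
  have hPu : P u := Relation.ReflTransGen.refl
  have hPv : ¬ P v := h
  -- get a T-chain from u to v
  obtain ⟨l, hchain, hlast⟩ := List.exists_isChain_cons_of_relationReflTransGen (hT.2 u v)
  rcases cross ends T P v hPv l u hchain hlast with
    ⟨f, hfT, a, b, hfends, hPa, hPb, hbv⟩ | hall
  · -- f is unsafe
    have hfsafe : f ∉ safeE := by
      intro hfs
      rcases hfends with hf | hf
      · exact hPb (hPa.tail ⟨f, Finset.mem_inter.mpr ⟨hfT, hfs⟩, Or.inl hf⟩)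
      · exact hPb (hPa.tail ⟨f, Finset.mem_inter.mpr ⟨hfT, hfs⟩, Or.inr hf⟩)
    have hef : e ≠ f := by rintro rfl; exact heT hfT
    -- the exchanged tree
    set T' : Finset E := insert e (T.erase f) with hT'
    have hsub : T ∩ safeE ⊆ T' := by
      intro g hg
      rw [Finset.mem_inter] at hg
      refine Finset.mem_insert_of_mem (Finset.mem_erase.mpr ⟨?_, hg.1⟩)
      rintro rfl; exact hfsafe hg.2
    have herase : T.erase f ⊆ T' := Finset.subset_insert _ _
    -- a and b are connected in T'
    have hab : Relation.ReflTransGen (Adj ends T') a b := by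
      have h1 : Relation.ReflTransGen (Adj ends T') a u := by
        have : Relation.ReflTransGen (Adj ends (T ∩ safeE)) a u :=
          (@Relation.ReflTransGen.stdSymm _ _ ⟨fun _ _ => Adj.symm'⟩).symm _ _ hPa
        exact Relation.ReflTransGen.mono (fun _ _ => adj_mono hsub) _ _ this
      have h2 : Adj ends T' u v := ⟨e, Finset.mem_insert_self _ _, Or.inl (by simp [hu, hv])⟩
      have h3 : Relation.ReflTransGen (Adj ends T') v b := by
        have : Relation.ReflTransGen (Adj ends (T.erase f)) v b :=
          (@Relation.ReflTransGen.stdSymm _ _ ⟨fun _ _ => Adj.symm'⟩).symm _ _ hbv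
        exact Relation.ReflTransGen.mono (fun _ _ => adj_mono herase) _ _ this
      exact (h1.tail h2).trans h3
    -- lifting single T-steps to T'-walks
    have lift : ∀ z w : V, Adj ends T z w → Relation.ReflTransGen (Adj ends T') z w := by
      intro z w ⟨g, hgT, hg⟩
      by_cases hgf : g = f
      · subst hgf
        rcases hfends with hf | hf <;> rcases hg with hg | hg <;> rw [hf] at hg <;>
          cases hg
        · exact hab
        · exact (@Relation.ReflTransGen.stdSymm _ _ ⟨fun _ _ => Adj.symm'⟩).symm _ _ hab
        · exact (@Relation.ReflTransGen.stdSymm _ _ ⟨fun _ _ => Adj.symm'⟩).symm _ _ hab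
        · exact hab
      · exact Relation.ReflTransGen.single
          ⟨g, herase (Finset.mem_erase.mpr ⟨hgf, hgT⟩), hg⟩
    -- T' is connected
    have hconn' : ∀ x y : V, Relation.ReflTransGen (Adj ends T') x y := by
      intro x y
      induction hT.2 x y with
      | refl => exact Relation.ReflTransGen.refl
      | tail _ hstep ih => exact ih.trans (lift _ _ hstep)
    -- T' has the right cardinality
    have hcard : T'.card = Fintype.card V - 1 := by
      rw [hT', Finset.card_insert_of_notMem (fun hmem => heT (Finset.mem_of_mem_erase hmem)),
        Finset.card_erase_of_mem hfT, ← hT.1]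
      have : 1 ≤ T.card := Finset.card_pos.mpr ⟨f, hfT⟩
      omega
    have hST' : IsSpanningTree ends T' := ⟨hcard, hconn'⟩
    -- T' has strictly more safe edges
    have hinter : T' ∩ safeE = insert e (T ∩ safeE) := by
      ext g
      simp only [hT', Finset.mem_inter, Finset.mem_insert, Finset.mem_erase]
      constructor
      · rintro ⟨rfl | ⟨hgf, hgT⟩, hgs⟩
        · exact Or.inl rfl
        · exact Or.inr ⟨hgT, hgs⟩
      · rintro (rfl | ⟨hgT, hgs⟩)
        · exact ⟨Or.inl rfl, he⟩
        · refine ⟨Or.inr ⟨?_, hgT⟩, hgs⟩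
          rintro rfl; exact hfsafe hgs
    have hlt : (T ∩ safeE).card < (T' ∩ safeE).card := by
      rw [hinter, Finset.card_insert_of_notMem (fun hmem => heT (Finset.mem_inter.mp hmem).1)]
      omega
    exact absurd (hmax T' hST') (not_le.mpr hlt)
  · exact (hall u (by simp)) hPu
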